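/- Maxima of sub-gamma random variables: if X₁, …, X_J are random variables with sup_{p≥1} E[|X_j|^p]^{1/p} / p^{1/γ} ≤ B for all j (for some γ, B > 0), then E[max_j |X_j|^p]^{1/p} ≤ C_γ (log(2+J))^{1/γ} B p^{1/γ} for all p ≥ 1, with constant C_γ depending only on γ. -/

import Mathlib

open MeasureTheory Real
open scoped ENNReal

lemma jensen_aux {Ω : Type} [MeasurableSpace Ω] (μ : Measure Ω) [IsProbabilityMeasure μ]
    {f : Ω → ℝ} (hmf : Measurable f) (hnn : ∀ ω, 0 ≤ f ω) {r : ℝ} (hr : 1 ≤ r)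
    (hint : Integrable (fun ω => f ω ^ r) μ) :
    ∫ ω, f ω ∂μ ≤ (∫ ω, f ω ^ r ∂μ) ^ (1/r) := by
  rcases eq_or_lt_of_le hr with h1 | h1
  · simp [← h1]
  have hr0 : (0:ℝ) < r := lt_trans zero_lt_one h1
  set F : Ω → ℝ≥0∞ := fun ω => ENNReal.ofReal (f ω) with hF
  have hFm : AEMeasurable F μ := (ENNReal.measurable_ofReal.comp hmf).aemeasurable
  have hconj : r.HolderConjugate (r / (r - 1)) := by
    exact Real.HolderConjugate.conjExponent h1
  have key : ∫⁻ ω, F ω ∂μ ≤ (∫⁻ ω, F ω ^ r ∂μ) ^ (1/r) := by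
    have := ENNReal.lintegral_mul_le_Lp_mul_Lq μ hconj hFm (aemeasurable_const (b := (1:ℝ≥0∞)))
    simpa using this
  have hFq : ∫⁻ ω, F ω ^ r ∂μ = ENNReal.ofReal (∫ ω, f ω ^ r ∂μ) := by
    rw [MeasureTheory.ofReal_integral_eq_lintegral_ofReal hint
      (Filter.Eventually.of_forall fun ω => Real.rpow_nonneg (hnn ω) r)]
    refine lintegral_congr fun ω => ?_
    rw [hF, ENNReal.ofReal_rpow_of_nonneg (hnn ω) hr0.le]
  have hfin : ∫⁻ ω, F ω ^ r ∂μ ≠ ⊤ := by rw [hFq]; exact ENNReal.ofReal_ne_top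
  have hL : ∫ ω, f ω ∂μ = (∫⁻ ω, F ω ∂μ).toReal := by
    rw [MeasureTheory.integral_eq_lintegral_of_nonneg_ae
      (Filter.Eventually.of_forall hnn) hmf.aestronglyMeasurable]
  rw [hL]
  calc (∫⁻ ω, F ω ∂μ).toReal ≤ ((∫⁻ ω, F ω ^ r ∂μ) ^ (1/r)).toReal := by
        apply ENNReal.toReal_mono _ key
        exact ENNReal.rpow_ne_top_of_nonneg (by positivity) hfin
    _ = (∫ ω, f ω ^ r ∂μ) ^ (1/r) := by
        rw [hFq, ← ENNReal.toReal_rpow, ENNReal.toReal_ofReal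
          (integral_nonneg fun ω => Real.rpow_nonneg (hnn ω) r)]

theorem maxima_of_subgamma_random_variables (γ : ℝ) (hγ : 0 < γ) :
    ∃ C > (0:ℝ),
      ∀ (Ω : Type) (_ : MeasurableSpace Ω) (μ : Measure Ω)
        (_ : IsProbabilityMeasure μ)
        (J : ℕ) (X : Fin J → Ω → ℝ) (B : ℝ), 0 < B →
        (∀ j, Measurable (X j)) →
        (∀ j, ∀ q : ℝ, 1 ≤ q → Integrable (fun ω => |X j ω| ^ q) μ) →
        (∀ j, ∀ q : ℝ, 1 ≤ q → ∫ ω, |X j ω| ^ q ∂μ ≤ (B * q ^ (1/γ)) ^ q) →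
        ∀ p : ℝ, 1 ≤ p →
          ∫ ω, (⨆ j, |X j ω|) ^ p ∂μ
            ≤ (C * (Real.log (2 + J)) ^ (1/γ) * B * p ^ (1/γ)) ^ p := by
  have hlog2 : (0:ℝ) < Real.log 2 := Real.log_pos (by norm_num)
  refine ⟨Real.exp 1 * (Real.log 2)⁻¹ ^ (1/γ), by positivity, ?_⟩
  intro Ω mΩ μ hProb J X B hB hX hInt hMom p hp
  set C : ℝ := Real.exp 1 * (Real.log 2)⁻¹ ^ (1/γ) with hC
  have hp0 : (0:ℝ) < p := lt_of_lt_of_le zero_lt_one hp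
  set L : ℝ := Real.log (2 + J) with hLdef
  have hL2 : Real.log 2 ≤ L := Real.log_le_log (by norm_num) (le_add_of_nonneg_right (Nat.cast_nonneg J))
  have hL0 : 0 < L := lt_of_lt_of_le hlog2 hL2
  have hRHSb : 0 ≤ C * L ^ (1/γ) * B * p ^ (1/γ) := by positivity
  rcases Nat.eq_zero_or_pos J with hJ | hJ
  · subst hJ
    have : ∀ ω : Ω, (⨆ j : Fin 0, |X j ω|) = 0 := fun ω => by simp [Real.iSup_of_isEmpty]
    simp only [this, Real.zero_rpow hp0.ne', integral_zero]
    exact Real.rpow_nonneg hRHSb p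
  haveI : Nonempty (Fin J) := Fin.pos_iff_nonempty.mp hJ
  set q : ℝ := max p L with hqdef
  have hpq : p ≤ q := le_max_left _ _
  have hLq : L ≤ q := le_max_right _ _
  have hq1 : 1 ≤ q := le_trans hp hpq
  have hq0 : (0:ℝ) < q := lt_of_lt_of_le zero_lt_one hq1
  set g : Ω → ℝ := fun ω => ⨆ j, |X j ω| with hgdef
  have hgm : Measurable g := Measurable.iSup fun j => (hX j).abs
  have hgnn : ∀ ω, 0 ≤ g ω := fun ω => Real.iSup_nonneg fun j => abs_nonneg _
  set S : Ω → ℝ := fun ω => ∑ j, |X j ω| ^ q with hSdef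
  have hSnn : ∀ ω, 0 ≤ S ω := fun ω =>
    Finset.sum_nonneg fun j _ => Real.rpow_nonneg (abs_nonneg _) q
  have hSint : Integrable S μ := integrable_finset_sum _ fun j _ => hInt j q hq1
  -- pointwise : g ^ q ≤ S
  have hkey : ∀ ω, g ω ^ q ≤ S ω := by
    intro ω
    have h1 : g ω ≤ S ω ^ (1/q) := by
      refine ciSup_le fun j => ?_
      have : |X j ω| ^ q ≤ S ω :=
        Finset.single_le_sum (f := fun i => |X i ω| ^ q)
          (fun i _ => Real.rpow_nonneg (abs_nonneg _) q) (Finset.mem_univ j)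
      calc |X j ω| = (|X j ω| ^ q) ^ (1/q) := by
            rw [← Real.rpow_mul (abs_nonneg _), mul_one_div_cancel hq0.ne', Real.rpow_one]
        _ ≤ S ω ^ (1/q) :=
            Real.rpow_le_rpow (Real.rpow_nonneg (abs_nonneg _) q) this (by positivity)
    calc g ω ^ q ≤ (S ω ^ (1/q)) ^ q := Real.rpow_le_rpow (hgnn ω) h1 hq0.le
      _ = S ω := by
          rw [← Real.rpow_mul (hSnn ω), one_div_mul_cancel hq0.ne', Real.rpow_one]
  -- integrability
  have hgq_m : Measurable fun ω => g ω ^ q :=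
    (Real.continuous_rpow_const hq0.le).measurable.comp hgm
  have hgq_int : Integrable (fun ω => g ω ^ q) μ := by
    refine hSint.mono hgq_m.aestronglyMeasurable (Filter.Eventually.of_forall fun ω => ?_)
    rw [Real.norm_eq_abs, Real.norm_eq_abs, abs_of_nonneg (Real.rpow_nonneg (hgnn ω) q),
      abs_of_nonneg (hSnn ω)]
    exact hkey ω
  have hgp_le : ∀ ω, g ω ^ p ≤ 1 + S ω := by
    intro ω
    rcases le_total (g ω) 1 with h | h
    · have : g ω ^ p ≤ 1 := Real.rpow_le_one (hgnn ω) h hp0.le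
      linarith [hSnn ω]
    · have h1 : g ω ^ p ≤ g ω ^ q := Real.rpow_le_rpow_of_exponent_le h hpq
      have := hkey ω
      linarith
  have hgp_m : Measurable fun ω => g ω ^ p :=
    (Real.continuous_rpow_const hp0.le).measurable.comp hgm
  have hgp_int : Integrable (fun ω => g ω ^ p) μ := by
    refine ((integrable_const (1:ℝ)).add hSint).mono hgp_m.aestronglyMeasurable
      (Filter.Eventually.of_forall fun ω => ?_)
    rw [Real.norm_eq_abs, Real.norm_eq_abs, abs_of_nonneg (Real.rpow_nonneg (hgnn ω) p)]
    exact le_trans (hgp_le ω) (le_abs_self _)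
  -- Jensen step : ∫ g^p ≤ (∫ g^q)^(p/q)
  have hrpq : 1 ≤ q / p := (one_le_div hp0).mpr hpq
  have hcomp : ∀ ω, (g ω ^ p) ^ (q/p) = g ω ^ q := by
    intro ω
    rw [← Real.rpow_mul (hgnn ω), mul_div_cancel₀ _ hp0.ne']
  have jensen : ∫ ω, g ω ^ p ∂μ ≤ (∫ ω, g ω ^ q ∂μ) ^ (p/q) := by
    have hint2 : Integrable (fun ω => (g ω ^ p) ^ (q/p)) μ := by
      simpa only [hcomp] using hgq_int
    have := jensen_aux μ hgp_m (fun ω => Real.rpow_nonneg (hgnn ω) p) hrpq hint2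
    simp only [hcomp] at this
    rwa [one_div_div] at this
  -- bound ∫ g^q
  have hbound : ∫ ω, g ω ^ q ∂μ ≤ (J : ℝ) * (B * q ^ (1/γ)) ^ q := by
    calc ∫ ω, g ω ^ q ∂μ ≤ ∫ ω, S ω ∂μ :=
          integral_mono hgq_int hSint hkey
      _ = ∑ j, ∫ ω, |X j ω| ^ q ∂μ := integral_finset_sum _ fun j _ => hInt j q hq1
      _ ≤ ∑ _j : Fin J, (B * q ^ (1/γ)) ^ q :=
          Finset.sum_le_sum fun j _ => hMom j q hq1
      _ = (J : ℝ) * (B * q ^ (1/γ)) ^ q := by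
          rw [Finset.sum_const, Finset.card_univ, Fintype.card_fin, nsmul_eq_mul]
  have hqB : (0:ℝ) ≤ B * q ^ (1/γ) := by positivity
  -- combine
  have step2 : (∫ ω, g ω ^ q ∂μ) ^ (p/q) ≤ ((J : ℝ) * (B * q ^ (1/γ)) ^ q) ^ (p/q) :=
    Real.rpow_le_rpow (integral_nonneg fun ω => Real.rpow_nonneg (hgnn ω) q) hbound
      (by positivity)
  have hJ1 : (1:ℝ) ≤ J := by exact_mod_cast hJ
  have step3 : ((J : ℝ) * (B * q ^ (1/γ)) ^ q) ^ (p/q)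
      = (J : ℝ) ^ (p/q) * (B * q ^ (1/γ)) ^ p := by
    rw [Real.mul_rpow (by positivity) (Real.rpow_nonneg hqB q),
      ← Real.rpow_mul hqB, mul_div_cancel₀ _ hq0.ne']
  have step4 : (J : ℝ) ^ (p/q) ≤ Real.exp p := by
    rw [Real.rpow_def_of_pos (by linarith : (0:ℝ) < (J:ℝ))]
    apply Real.exp_le_exp.mpr
    have hlogJ0 : 0 ≤ Real.log J := Real.log_nonneg hJ1
    have hlogJ : Real.log J ≤ q := by
      refine le_trans ?_ hLq
      exact Real.log_le_log (by linarith) (by linarith)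
    calc Real.log ↑J * (p / q) = p * (Real.log ↑J / q) := by ring
      _ ≤ p * 1 := by
          apply mul_le_mul_of_nonneg_left _ hp0.le
          exact (div_le_one hq0).mpr hlogJ
      _ = p := mul_one p
  -- bound on q
  have hqle : q ≤ p * L / Real.log 2 := by
    apply max_le
    · rw [le_div_iff₀ hlog2]
      nlinarith
    · rw [le_div_iff₀ hlog2]
      nlinarith [Real.log_le_sub_one_of_pos (by norm_num : (0:ℝ) < 2)]
  have hγinv : (0:ℝ) < 1/γ := by positivity
  have hqpow : q ^ (1/γ) ≤ (Real.log 2)⁻¹ ^ (1/γ) * p ^ (1/γ) * L ^ (1/γ) := by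
    calc q ^ (1/γ) ≤ (p * L / Real.log 2) ^ (1/γ) :=
          Real.rpow_le_rpow hq0.le hqle hγinv.le
      _ = (Real.log 2)⁻¹ ^ (1/γ) * p ^ (1/γ) * L ^ (1/γ) := by
          rw [div_eq_mul_inv, Real.mul_rpow (by positivity) (by positivity),
            Real.mul_rpow hp0.le hL0.le]
          ring
  -- final base comparison
  have base : Real.exp 1 * (B * q ^ (1/γ)) ≤ C * L ^ (1/γ) * B * p ^ (1/γ) := by
    rw [hC]
    calc Real.exp 1 * (B * q ^ (1/γ))
        ≤ Real.exp 1 * (B * ((Real.log 2)⁻¹ ^ (1/γ) * p ^ (1/γ) * L ^ (1/γ))) := by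
          apply mul_le_mul_of_nonneg_left _ (Real.exp_pos 1).le
          exact mul_le_mul_of_nonneg_left hqpow hB.le
      _ = Real.exp 1 * (Real.log 2)⁻¹ ^ (1/γ) * L ^ (1/γ) * B * p ^ (1/γ) := by ring
  calc ∫ ω, g ω ^ p ∂μ ≤ (∫ ω, g ω ^ q ∂μ) ^ (p/q) := jensen
    _ ≤ (J : ℝ) ^ (p/q) * (B * q ^ (1/γ)) ^ p := by rw [← step3]; exact step2
    _ ≤ Real.exp p * (B * q ^ (1/γ)) ^ p := by
        apply mul_le_mul_of_nonneg_right step4 (Real.rpow_nonneg hqB p)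
    _ = (Real.exp 1 * (B * q ^ (1/γ))) ^ p := by
        rw [Real.mul_rpow (Real.exp_pos 1).le hqB, Real.exp_one_rpow]
    _ ≤ (C * L ^ (1/γ) * B * p ^ (1/γ)) ^ p :=
        Real.rpow_le_rpow (by positivity) base hp0.le
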